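/- For any finite graph G in which every vertex has degree at most d, the bubble width of G is at most d times the path width of G, i.e., BW(G) ≤ d·PW(G). -/

import Mathlib

/-- Number of edges of `G` with exactly one endpoint in `S`
(counted as ordered pairs with the first coordinate in `S`). -/
noncomputable def cutSize {V : Type*} (G : SimpleGraph V) (S : Set V) : ℕ :=
  {p : V × V | G.Adj p.1 p.2 ∧ p.1 ∈ S ∧ p.2 ∉ S}.ncard

/-- The prefix `{b 0, …, b i}` of an ordering of the vertices. -/
def prefixSet {V : Type*} [Fintype V] (b : Fin (Fintype.card V) ≃ V)
    (i : Fin (Fintype.card V)) : Set V :=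
  {v | ∃ j, j ≤ i ∧ b j = v}

/-- The width of a bubbling (vertex ordering): max size of a prefix cut. -/
noncomputable def ordWidth {V : Type*} [Fintype V] (G : SimpleGraph V)
    (b : Fin (Fintype.card V) ≃ V) : ℕ :=
  Finset.univ.sup fun i => cutSize G (prefixSet b i)

/-- The bubble width of a finite graph. -/
noncomputable def bubbleWidth {V : Type*} [Fintype V] (G : SimpleGraph V) : ℕ :=
  sInf (Set.range (ordWidth G))


/-- A path decomposition of `G`. -/
structure PathDecomp {V : Type*} (G : SimpleGraph V) where
  m : ℕ
  bag : Fin m → Set V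
  cover : ∀ ⦃u v⦄, G.Adj u v → ∃ i, u ∈ bag i ∧ v ∈ bag i
  interval : ∀ v (i j k : Fin m), i ≤ j → j ≤ k → v ∈ bag i → v ∈ bag k → v ∈ bag j

/-- The width of a path decomposition: the maximal bag size. -/
noncomputable def PathDecomp.width {V : Type*} {G : SimpleGraph V} (D : PathDecomp G) : ℕ :=
  Finset.univ.sup fun i => (D.bag i).ncard

/-- The path width of a finite graph. -/
noncomputable def pathWidth {V : Type*} (G : SimpleGraph V) : ℕ :=
  sInf (Set.range (PathDecomp.width (G := G)))


open Classical in
/-- Counting lemma: pairs (u, v) with u in a finite set B and v a neighbor of u. -/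
lemma count_pairs_le {V : Type*} [Fintype V] (G : SimpleGraph V) (d : ℕ)
    (hdeg : ∀ v : V, (G.neighborSet v).ncard ≤ d) (B : Set V) :
    {p : V × V | p.1 ∈ B ∧ p.2 ∈ G.neighborSet p.1}.ncard ≤ d * B.ncard := by
  classical
  have hB : B.Finite := Set.toFinite B
  set T : Finset (V × V) :=
    hB.toFinset.biUnion (fun u => ({u} : Finset V) ×ˢ (G.neighborSet u).toFinset) with hT
  have hset : {p : V × V | p.1 ∈ B ∧ p.2 ∈ G.neighborSet p.1} = ↑T := by
    ext ⟨u, v⟩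
    constructor
    · rintro ⟨h1, h2⟩
      refine Finset.mem_coe.mpr (Finset.mem_biUnion.mpr ⟨u, hB.mem_toFinset.mpr h1, ?_⟩)
      rw [Finset.mem_product]
      exact ⟨Finset.mem_singleton_self u, Set.mem_toFinset.mpr h2⟩
    · intro hp
      obtain ⟨w, hw, hp⟩ := Finset.mem_biUnion.mp (Finset.mem_coe.mp hp)
      rw [Finset.mem_product, Finset.mem_singleton] at hp
      obtain ⟨rfl, h2⟩ := hp
      exact ⟨hB.mem_toFinset.mp hw, Set.mem_toFinset.mp h2⟩
  rw [hset, Set.ncard_coe_finset]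
  calc T.card ≤ ∑ u ∈ hB.toFinset, (({u} : Finset V) ×ˢ (G.neighborSet u).toFinset).card :=
        Finset.card_biUnion_le
    _ ≤ ∑ u ∈ hB.toFinset, d := by
        refine Finset.sum_le_sum fun u _ => ?_
        rw [Finset.card_product, Finset.card_singleton, one_mul]
        rw [← Set.ncard_eq_toFinset_card']
        exact hdeg u
    _ = hB.toFinset.card * d := by rw [Finset.sum_const, smul_eq_mul]
    _ = d * B.ncard := by rw [Set.ncard_eq_toFinset_card B hB, mul_comm]

lemma key_lemma {V : Type*} [Fintype V] [DecidableEq V]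
    (G : SimpleGraph V) (d : ℕ) (hdeg : ∀ v : V, (G.neighborSet v).ncard ≤ d)
    (D : PathDecomp G) : bubbleWidth G ≤ d * D.width := by
  classical
  set m := D.m with hm
  -- first bag index of a vertex (m if in no bag)
  set f : V → ℕ := fun v => sInf (insert m {j | ∃ h : j < m, v ∈ D.bag ⟨j, h⟩}) with hf
  have hfle : ∀ v, f v ≤ m := fun v => Nat.sInf_le (Set.mem_insert _ _)
  have hfmin : ∀ v (j : Fin m), v ∈ D.bag j → f v ≤ j.val := fun v j hj =>
    Nat.sInf_le (Set.mem_insert_iff.mpr (Or.inr ⟨j.isLt, by simpa using hj⟩))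
  have hfmem : ∀ v (h : f v < m), v ∈ D.bag ⟨f v, h⟩ := by
    intro v h
    have := Nat.sInf_mem (s := insert m {j | ∃ h : j < m, v ∈ D.bag ⟨j, h⟩})
      ⟨m, Set.mem_insert _ _⟩
    rcases this with h1 | h2
    · have h1' : f v = m := h1
      omega
    · obtain ⟨h', hv⟩ := h2; exact hv
  set n := Fintype.card V with hn
  set e : Fin n ≃ V := (Fintype.equivFin V).symm with he
  set g : Fin n → ℕ := f ∘ e with hg
  set σ := Tuple.sort g with hσ
  set b : Fin n ≃ V := σ.trans e with hb
  have hmono : Monotone (g ∘ σ) := Tuple.monotone_sort g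
  have hfb : ∀ j : Fin n, f (b j) = (g ∘ σ) j := fun j => rfl
  have hbw : bubbleWidth G ≤ ordWidth G b := Nat.sInf_le ⟨b, rfl⟩
  refine hbw.trans ?_
  rw [ordWidth]
  refine Finset.sup_le fun i _ => ?_
  set S := prefixSet b i with hS
  set t := f (b i) with ht
  have hSle : ∀ u ∈ S, f u ≤ t := by
    rintro u ⟨j, hj, rfl⟩
    exact hmono hj
  have hScge : ∀ v, v ∉ S → t ≤ f v := by
    intro v hv
    have hvb : b (b.symm v) = v := b.apply_symm_apply v
    have : i ≤ b.symm v := by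
      by_contra h
      exact hv ⟨b.symm v, le_of_not_ge h, hvb⟩
    calc t = (g ∘ σ) i := hfb i
      _ ≤ (g ∘ σ) (b.symm v) := hmono this
      _ = f v := by rw [← hfb]; rw [hvb]
  by_cases htm : t < m
  · -- every cut-edge source lies in bag t
    have hsub : {p : V × V | G.Adj p.1 p.2 ∧ p.1 ∈ S ∧ p.2 ∉ S} ⊆
        {p : V × V | p.1 ∈ D.bag ⟨t, htm⟩ ∧ p.2 ∈ G.neighborSet p.1} := by
      rintro ⟨u, v⟩ ⟨hadj, huS, hvS⟩
      obtain ⟨j, huj, hvj⟩ := D.cover hadj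
      have h1 : f u ≤ t := hSle u huS
      have h2 : t ≤ f v := hScge v hvS
      have h3 : f v ≤ j.val := hfmin v j hvj
      have h4 : f u < m := lt_of_le_of_lt (h1.trans (h2.trans h3)) j.isLt
      have h5 : u ∈ D.bag ⟨f u, h4⟩ := hfmem u h4
      have h6 : u ∈ D.bag ⟨t, htm⟩ :=
        D.interval u ⟨f u, h4⟩ ⟨t, htm⟩ j h1 (h2.trans h3) h5 huj
      exact ⟨h6, hadj⟩
    calc cutSize G S ≤ {p : V × V | p.1 ∈ D.bag ⟨t, htm⟩ ∧ p.2 ∈ G.neighborSet p.1}.ncard :=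
          Set.ncard_le_ncard hsub (Set.toFinite _)
      _ ≤ d * (D.bag ⟨t, htm⟩).ncard := count_pairs_le G d hdeg _
      _ ≤ d * D.width := by
          refine Nat.mul_le_mul_left d ?_
          exact Finset.le_sup (f := fun i => (D.bag i).ncard) (Finset.mem_univ (⟨t, htm⟩ : Fin m))
  · -- t = m : no cut edges
    have : {p : V × V | G.Adj p.1 p.2 ∧ p.1 ∈ S ∧ p.2 ∉ S} = ∅ := by
      ext ⟨u, v⟩
      simp only [Set.mem_setOf_eq, Set.mem_empty_iff_false, iff_false]
      rintro ⟨hadj, huS, hvS⟩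
      obtain ⟨j, huj, hvj⟩ := D.cover hadj
      have := hfmin v j hvj
      have := hScge v hvS
      have := j.isLt
      omega
    rw [cutSize, this, Set.ncard_empty]
    exact Nat.zero_le _

/-- if every vertex of `G` has degree at most `d`, then the bubble width
of `G` is at most `d` times its path width. -/
theorem bubbleWidth_le_degree_mul_pathWidth {V : Type*} [Fintype V] [DecidableEq V]
    (G : SimpleGraph V) (d : ℕ) (hdeg : ∀ v : V, (G.neighborSet v).ncard ≤ d) :
    bubbleWidth G ≤ d * pathWidth G := by
  have hne : (Set.range (PathDecomp.width (G := G))).Nonempty :=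
    ⟨(⟨1, fun _ => Set.univ, fun u v _ => ⟨0, trivial, trivial⟩,
      fun v i j k _ _ _ _ => trivial⟩ : PathDecomp G).width, Set.mem_range_self _⟩
  obtain ⟨D, hD⟩ := Nat.sInf_mem hne
  rw [pathWidth, ← hD]
  exact key_lemma G d hdeg D
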